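/- Let m ≥ k ≥ 1, n = k + m, and for k+1 ≤ i < j ≤ k+m let b_{i,j} : [0,1] → [0,1] be C¹ with c₁ ≤ |b_{i,j}'| ≤ c₂ on (0,1). Let M_i ∈ ℝ^{1×(m+i-1-k)} for 1 ≤ i ≤ k, and for v = (v₁,…,v_n) ∈ [L^q(0,1)]^n define |||v|||^q = Σ_{i=1}^{m} ∫₀¹ |v_i|^q + Σ_{i=1}^{k} ∫₀¹ |v_{m+i}(x) - M_i(v_{k+1}(b_{k+1,m+i}(x)),…,v_{m+i-1}(b_{m+i-1,m+i}(x)))|^q dx. Then there exists λ ≥ 1, depending only on k, m, c₁, c₂ and the M_i (but not on q), such that λ^{-1} ‖v‖_{L^q(0,1)} ≤ |||v||| ≤ λ ‖v‖_{L^q(0,1)} for all v and all q ≥ 1. -/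

import Mathlib

open scoped ENNReal


section LyapunovHelpers
open MeasureTheory Set Finset ENNReal

lemma my_lintegral_image_eq {s : Set ℝ} {f : ℝ → ℝ} {f' : ℝ → ℝ}
    (hs : MeasurableSet s) (hf' : ∀ x ∈ s, HasDerivWithinAt f (f' x) s x)
    (hf : InjOn f s) (g : ℝ → ℝ≥0∞) :
    ∫⁻ x in f '' s, g x = ∫⁻ x in s, ENNReal.ofReal |f' x| * g (f x) := by
  simpa only [ContinuousLinearMap.det_toSpanSingleton] using
    lintegral_image_eq_lintegral_abs_det_fderiv_mul volume hs
      (fun x hx => (hf' x hx).hasFDerivWithinAt) hf g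

lemma my_cov {bf : ℝ → ℝ} {c₁ : ℝ} (hc₁ : 0 < c₁)
    (hcd : ContDiffOn ℝ 1 bf (Icc 0 1)) (hmap : MapsTo bf (Icc 0 1) (Icc 0 1))
    (hder : ∀ x ∈ Ioo (0:ℝ) 1, c₁ ≤ |derivWithin bf (Icc 0 1) x|)
    (g : ℝ → ℝ≥0∞) :
    ∫⁻ x in Ioo (0:ℝ) 1, g (bf x) ≤ ENNReal.ofReal c₁⁻¹ * ∫⁻ y in Ioo (0:ℝ) 1, g y := by
  have hnhds : ∀ x ∈ Ioo (0:ℝ) 1, Icc (0:ℝ) 1 ∈ nhds x := fun x hx =>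
    Icc_mem_nhds hx.1 hx.2
  have hdw : ∀ x ∈ Ioo (0:ℝ) 1, derivWithin bf (Icc 0 1) x = deriv bf x := fun x hx =>
    derivWithin_of_mem_nhds (hnhds x hx)
  have hd : ∀ x ∈ Ioo (0:ℝ) 1, HasDerivAt bf (deriv bf x) x := by
    intro x hx
    exact (((hcd.differentiableOn one_ne_zero) x (Ioo_subset_Icc_self hx)).differentiableAt
      (hnhds x hx)).hasDerivAt
  have hder' : ∀ x ∈ Ioo (0:ℝ) 1, c₁ ≤ |deriv bf x| := fun x hx => by
    rw [← hdw x hx]; exact hder x hx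
  have hcont : ContinuousOn (deriv bf) (Ioo 0 1) := by
    apply ((hcd.continuousOn_derivWithin (uniqueDiffOn_Icc zero_lt_one) le_rfl).mono
      Ioo_subset_Icc_self).congr
    intro x hx
    exact (hdw x hx).symm
  -- sign dichotomy
  have hsign : (∀ x ∈ Ioo (0:ℝ) 1, 0 < deriv bf x) ∨ (∀ x ∈ Ioo (0:ℝ) 1, deriv bf x < 0) := by
    by_contra h
    push_neg at h
    obtain ⟨⟨x, hx, hx'⟩, ⟨y, hy, hy'⟩⟩ := h
    have hxneg : deriv bf x < 0 := lt_of_le_of_ne hx' (by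
      intro h0
      have := hder' x hx
      rw [h0, abs_zero] at this
      linarith)
    have hypos : 0 < deriv bf y := lt_of_le_of_ne hy' (by
      intro h0
      have := hder' y hy
      rw [← h0, abs_zero] at this
      linarith)
    have husub : uIcc x y ⊆ Ioo (0:ℝ) 1 := (ordConnected_Ioo).uIcc_subset hx hy
    have := intermediate_value_uIcc (hcont.mono husub)
    have h0 : (0:ℝ) ∈ uIcc (deriv bf x) (deriv bf y) := by
      rw [Set.mem_uIcc]
      left; exact ⟨le_of_lt hxneg, le_of_lt hypos⟩
    obtain ⟨z, hz, hz0⟩ := this h0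
    have := hder' z (husub hz)
    rw [hz0, abs_zero] at this
    linarith
  have hinj : InjOn bf (Ioo 0 1) := by
    rcases hsign with hpos | hneg
    · exact (strictMonoOn_of_deriv_pos (convex_Ioo 0 1)
        (hcd.continuousOn.mono Ioo_subset_Icc_self)
        (fun x hx => hpos x (by rwa [interior_Ioo] at hx))).injOn
    · exact (strictAntiOn_of_deriv_neg (convex_Ioo 0 1)
        (hcd.continuousOn.mono Ioo_subset_Icc_self)
        (fun x hx => hneg x (by rwa [interior_Ioo] at hx))).injOn
  have key := my_lintegral_image_eq (f' := fun x => deriv bf x) measurableSet_Ioo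
    (fun x hx => (hd x hx).hasDerivWithinAt) hinj g
  calc ∫⁻ x in Ioo (0:ℝ) 1, g (bf x)
      ≤ ∫⁻ x in Ioo (0:ℝ) 1, ENNReal.ofReal c₁⁻¹ * (ENNReal.ofReal |deriv bf x| * g (bf x)) := by
        apply lintegral_mono_ae
        apply ae_restrict_of_forall_mem measurableSet_Ioo
        intro x hx
        rw [← mul_assoc]
        apply le_mul_of_one_le_left (zero_le)
        rw [← ENNReal.ofReal_mul (le_of_lt (inv_pos.2 hc₁))]
        rw [show (1:ℝ≥0∞) = ENNReal.ofReal 1 by simp]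
        apply ENNReal.ofReal_le_ofReal
        rw [← inv_mul_cancel₀ (ne_of_gt hc₁)]
        exact mul_le_mul_of_nonneg_left (hder' x hx) (le_of_lt (inv_pos.2 hc₁))
    _ = ENNReal.ofReal c₁⁻¹ * ∫⁻ x in Ioo (0:ℝ) 1, ENNReal.ofReal |deriv bf x| * g (bf x) :=
        lintegral_const_mul' _ _ ENNReal.ofReal_ne_top
    _ = ENNReal.ofReal c₁⁻¹ * ∫⁻ y in bf '' Ioo (0:ℝ) 1, g y := by rw [key]
    _ ≤ ENNReal.ofReal c₁⁻¹ * ∫⁻ y in Icc (0:ℝ) 1, g y := by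
        gcongr
        exact (Set.image_mono Set.Ioo_subset_Icc_self).trans hmap.image_subset
    _ = ENNReal.ofReal c₁⁻¹ * ∫⁻ y in Ioo (0:ℝ) 1, g y := by
        rw [setLIntegral_congr Ioo_ae_eq_Icc]

lemma my_sum_rpow_le {ι : Type*} (s : Finset ι) (f : ι → ℝ≥0∞) {q : ℝ} (hq : 1 ≤ q) :
    (∑ i ∈ s, f i) ^ q ≤ (s.card : ℝ≥0∞) ^ q * ∑ i ∈ s, f i ^ q := by
  have hq0 : 0 ≤ q := le_trans zero_le_one hq
  rcases s.eq_empty_or_nonempty with h | h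
  · simp [h, ENNReal.zero_rpow_of_pos (lt_of_lt_of_le zero_lt_one hq)]
  · obtain ⟨i₀, hi₀, hmax⟩ := s.exists_max_image f h
    calc (∑ i ∈ s, f i) ^ q ≤ ((s.card : ℝ≥0∞) * f i₀) ^ q := by
          apply ENNReal.rpow_le_rpow _ hq0
          simpa [nsmul_eq_mul] using s.sum_le_card_nsmul f (f i₀) hmax
      _ = (s.card : ℝ≥0∞) ^ q * f i₀ ^ q := ENNReal.mul_rpow_of_nonneg _ _ hq0
      _ ≤ (s.card : ℝ≥0∞) ^ q * ∑ i ∈ s, f i ^ q := by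
          gcongr
          exact Finset.single_le_sum (f := fun i => f i ^ q) (fun i _ => zero_le) hi₀

lemma my_add_rpow_le (a b : ℝ≥0∞) {q : ℝ} (hq : 1 ≤ q) :
    (a + b) ^ q ≤ (2 : ℝ≥0∞) ^ q * (a ^ q + b ^ q) := by
  have hq0 : 0 ≤ q := le_trans zero_le_one hq
  calc (a + b) ^ q ≤ ((2 : ℝ≥0∞) * (a ⊔ b)) ^ q := by
        apply ENNReal.rpow_le_rpow _ hq0
        rw [two_mul]
        exact add_le_add le_sup_left le_sup_right
    _ = (2 : ℝ≥0∞) ^ q * (a ⊔ b) ^ q := ENNReal.mul_rpow_of_nonneg _ _ hq0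
    _ ≤ (2 : ℝ≥0∞) ^ q * (a ^ q + b ^ q) := by
        gcongr
        rcases le_total a b with h | h
        · rw [sup_eq_right.2 h]; exact le_add_self
        · rw [sup_eq_left.2 h]; exact le_self_add

lemma my_tri {ι : Type*} (s : Finset ι) (y w : ℝ) (cf zf : ι → ℝ) {q : ℝ} (hq : 1 ≤ q)
    (hy : |y| ≤ |w| + ∑ j ∈ s, |cf j| * |zf j|) :
    (ENNReal.ofReal |y|) ^ q ≤ (2 : ℝ≥0∞) ^ q * ((ENNReal.ofReal |w|) ^ q
      + (s.card : ℝ≥0∞) ^ q * ∑ j ∈ s, (ENNReal.ofReal |cf j|) ^ q * (ENNReal.ofReal |zf j|) ^ q) := by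
  have hq0 : 0 ≤ q := le_trans zero_le_one hq
  have h1 : (ENNReal.ofReal |y|) ^ q
      ≤ (ENNReal.ofReal |w| + ∑ j ∈ s, ENNReal.ofReal |cf j| * ENNReal.ofReal |zf j|) ^ q := by
    apply ENNReal.rpow_le_rpow _ hq0
    calc ENNReal.ofReal |y| ≤ ENNReal.ofReal (|w| + ∑ j ∈ s, |cf j| * |zf j|) :=
          ENNReal.ofReal_le_ofReal hy
      _ = ENNReal.ofReal |w| + ∑ j ∈ s, ENNReal.ofReal |cf j| * ENNReal.ofReal |zf j| := by
          rw [ENNReal.ofReal_add (abs_nonneg _) (Finset.sum_nonneg fun j _ =>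
            mul_nonneg (abs_nonneg _) (abs_nonneg _)),
            ENNReal.ofReal_sum_of_nonneg fun j _ => mul_nonneg (abs_nonneg _) (abs_nonneg _)]
          congr 1
          exact Finset.sum_congr rfl fun j _ => ENNReal.ofReal_mul (abs_nonneg _)
  refine h1.trans ?_
  refine (my_add_rpow_le _ _ hq).trans ?_
  gcongr
  refine (my_sum_rpow_le s _ hq).trans ?_
  gcongr with j hj
  rw [ENNReal.mul_rpow_of_nonneg _ _ hq0]

lemma my_tri_int {ι : Type*} (s : Finset ι) {μ : Measure ℝ} (y w : ℝ → ℝ) (cf : ι → ℝ)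
    (zf : ι → ℝ → ℝ) {q : ℝ} (hq : 1 ≤ q)
    (hw : AEMeasurable w μ) (hz : ∀ j ∈ s, AEMeasurable (zf j) μ)
    (hy : ∀ x, |y x| ≤ |w x| + ∑ j ∈ s, |cf j| * |zf j x|) :
    ∫⁻ x, (ENNReal.ofReal |y x|) ^ q ∂μ
      ≤ (2 : ℝ≥0∞) ^ q * (∫⁻ x, (ENNReal.ofReal |w x|) ^ q ∂μ
        + (s.card : ℝ≥0∞) ^ q * ∑ j ∈ s,
            (ENNReal.ofReal |cf j|) ^ q * ∫⁻ x, (ENNReal.ofReal |zf j x|) ^ q ∂μ) := by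
  have hq0 : 0 ≤ q := le_trans zero_le_one hq
  have aem : ∀ (f : ℝ → ℝ), AEMeasurable f μ →
      AEMeasurable (fun x => (ENNReal.ofReal |f x|) ^ q) μ := fun f hf =>
    ENNReal.continuous_rpow_const.measurable.comp_aemeasurable
      ((measurable_abs.comp_aemeasurable hf).ennreal_ofReal)
  calc ∫⁻ x, (ENNReal.ofReal |y x|) ^ q ∂μ
      ≤ ∫⁻ x, (2 : ℝ≥0∞) ^ q * ((ENNReal.ofReal |w x|) ^ q
          + (s.card : ℝ≥0∞) ^ q * ∑ j ∈ s,
              (ENNReal.ofReal |cf j|) ^ q * (ENNReal.ofReal |zf j x|) ^ q) ∂μ := by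
        apply lintegral_mono
        intro x
        exact my_tri s (y x) (w x) cf (fun j => zf j x) hq (hy x)
    _ = (2 : ℝ≥0∞) ^ q * ∫⁻ x, ((ENNReal.ofReal |w x|) ^ q
          + (s.card : ℝ≥0∞) ^ q * ∑ j ∈ s,
              (ENNReal.ofReal |cf j|) ^ q * (ENNReal.ofReal |zf j x|) ^ q) ∂μ :=
        lintegral_const_mul' _ _ (ENNReal.rpow_ne_top_of_nonneg hq0 ENNReal.ofNat_ne_top)
    _ ≤ (2 : ℝ≥0∞) ^ q * (∫⁻ x, (ENNReal.ofReal |w x|) ^ q ∂μ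
        + (s.card : ℝ≥0∞) ^ q * ∑ j ∈ s,
            (ENNReal.ofReal |cf j|) ^ q * ∫⁻ x, (ENNReal.ofReal |zf j x|) ^ q ∂μ) := by
        gcongr
        rw [lintegral_add_left' (aem w hw)]
        gcongr
        rw [lintegral_const_mul' _ _ (ENNReal.rpow_ne_top_of_nonneg hq0 (natCast_ne_top _))]
        gcongr
        rw [lintegral_finset_sum' s (fun j hj => AEMeasurable.const_mul (aem _ (hz j hj)) _)]
        apply Finset.sum_le_sum
        intro j hj
        rw [lintegral_const_mul' _ _
          (ENNReal.rpow_ne_top_of_nonneg hq0 ENNReal.ofReal_ne_top)]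

lemma my_one_le_rpow {r : ℝ} (hr : 1 ≤ r) {q : ℝ} (hq : 1 ≤ q) :
    1 ≤ (ENNReal.ofReal r) ^ q :=
  ENNReal.one_le_rpow (ENNReal.one_le_ofReal.2 hr) (lt_of_lt_of_le zero_lt_one hq)

lemma my_self_le_rpow {r : ℝ} (hr : 1 ≤ r) {q : ℝ} (hq : 1 ≤ q) :
    ENNReal.ofReal r ≤ (ENNReal.ofReal r) ^ q := by
  conv_lhs => rw [← ENNReal.rpow_one (ENNReal.ofReal r)]
  exact ENNReal.rpow_le_rpow_of_exponent_le (ENNReal.one_le_ofReal.2 hr) hq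

lemma my_emul {r s : ℝ} (hr : 0 ≤ r) (hs : 0 ≤ s) {q : ℝ} (hq0 : 0 ≤ q) :
    (ENNReal.ofReal r) ^ q * (ENNReal.ofReal s) ^ q = (ENNReal.ofReal (r * s)) ^ q := by
  rw [ENNReal.ofReal_mul hr, ENNReal.mul_rpow_of_nonneg _ _ hq0]

lemma my_two_rpow {q : ℝ} : (2 : ℝ≥0∞) ^ q = (ENNReal.ofReal 2) ^ q := by
  norm_num

lemma my_shape {ι : Type*} {Ac Pc cc : ℝ} (hA : 1 ≤ Ac) (hP : 1 ≤ Pc) (hc : 1 ≤ cc)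
    {q : ℝ} (hq : 1 ≤ q) (s : Finset ι) (cf : ι → ℝ) (hcf : ∀ j ∈ s, |cf j| ≤ Pc)
    (hcard : (s.card : ℝ) ≤ Ac) (I0 Y : ℝ≥0∞) (Cq Aq : ι → ℝ≥0∞)
    (hC : ∀ j ∈ s, Cq j ≤ ENNReal.ofReal cc * Aq j)
    (hI0 : I0 ≤ Y) (hAY : ∀ j ∈ s, Aq j ≤ Y) :
    (2 : ℝ≥0∞) ^ q * (I0 + (s.card : ℝ≥0∞) ^ q * ∑ j ∈ s, (ENNReal.ofReal |cf j|) ^ q * Cq j)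
      ≤ (ENNReal.ofReal (4 * Ac * Ac * Pc * cc)) ^ q * Y := by
  have hq0 : 0 ≤ q := zero_le_one.trans hq
  have hA0 : 0 ≤ Ac := zero_le_one.trans hA
  have hP0 : 0 ≤ Pc := zero_le_one.trans hP
  have hc0 : 0 ≤ cc := zero_le_one.trans hc
  have hcardE : (s.card : ℝ≥0∞) ≤ ENNReal.ofReal Ac := by
    rw [← ENNReal.ofReal_natCast]
    exact ENNReal.ofReal_le_ofReal hcard
  have hsum1 : ∑ j ∈ s, (ENNReal.ofReal |cf j|) ^ q * Cq j
      ≤ (ENNReal.ofReal Pc) ^ q * (ENNReal.ofReal cc * (ENNReal.ofReal Ac * Y)) := by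
    calc ∑ j ∈ s, (ENNReal.ofReal |cf j|) ^ q * Cq j
        ≤ ∑ j ∈ s, (ENNReal.ofReal Pc) ^ q * (ENNReal.ofReal cc * Aq j) := by
          apply Finset.sum_le_sum
          intro j hj
          exact mul_le_mul' (ENNReal.rpow_le_rpow (ENNReal.ofReal_le_ofReal (hcf j hj)) hq0)
            (hC j hj)
      _ = (ENNReal.ofReal Pc) ^ q * (ENNReal.ofReal cc * ∑ j ∈ s, Aq j) := by
          rw [← Finset.mul_sum, ← Finset.mul_sum]
      _ ≤ (ENNReal.ofReal Pc) ^ q * (ENNReal.ofReal cc * (ENNReal.ofReal Ac * Y)) := by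
          gcongr
          calc ∑ j ∈ s, Aq j ≤ s.card • Y := Finset.sum_le_card_nsmul _ _ _ hAY
            _ = (s.card : ℝ≥0∞) * Y := nsmul_eq_mul _ _
            _ ≤ ENNReal.ofReal Ac * Y := mul_le_mul_left hcardE _
  have hMb : 1 ≤ Ac * Ac * Pc * cc := by
    have h2 : 1 ≤ Ac * Ac := by nlinarith
    have h3 : 1 ≤ Ac * Ac * Pc := by nlinarith
    nlinarith
  calc (2 : ℝ≥0∞) ^ q * (I0 + (s.card : ℝ≥0∞) ^ q * ∑ j ∈ s, (ENNReal.ofReal |cf j|) ^ q * Cq j)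
      ≤ (2 : ℝ≥0∞) ^ q * (Y + (ENNReal.ofReal Ac) ^ q *
          ((ENNReal.ofReal Pc) ^ q * (ENNReal.ofReal cc * (ENNReal.ofReal Ac * Y)))) := by
        gcongr <;>
          first
            | exact hI0
            | exact ENNReal.rpow_le_rpow hcardE hq0
            | exact hsum1
    _ ≤ (2 : ℝ≥0∞) ^ q * ((ENNReal.ofReal (Ac * Ac * Pc * cc)) ^ q * Y + (ENNReal.ofReal Ac) ^ q *
          ((ENNReal.ofReal Pc) ^ q * ((ENNReal.ofReal cc) ^ q * ((ENNReal.ofReal Ac) ^ q * Y)))) := by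
        gcongr
        · exact le_mul_of_one_le_left (zero_le) (my_one_le_rpow hMb hq)
        · exact my_self_le_rpow hc hq
        · exact my_self_le_rpow hA hq
    _ = (2 : ℝ≥0∞) ^ q * (2 * ((ENNReal.ofReal (Ac * Ac * Pc * cc)) ^ q * Y)) := by
        congr 1
        rw [two_mul]
        congr 1
        calc (ENNReal.ofReal Ac) ^ q *
            ((ENNReal.ofReal Pc) ^ q * ((ENNReal.ofReal cc) ^ q * ((ENNReal.ofReal Ac) ^ q * Y)))
            = ((ENNReal.ofReal Ac) ^ q * (ENNReal.ofReal Pc) ^ q * (ENNReal.ofReal cc) ^ q *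
                (ENNReal.ofReal Ac) ^ q) * Y := by ring
          _ = (ENNReal.ofReal (Ac * Pc * cc * Ac)) ^ q * Y := by
              rw [my_emul hA0 hP0 hq0, my_emul (by positivity) hc0 hq0,
                my_emul (by positivity) hA0 hq0]
          _ = (ENNReal.ofReal (Ac * Ac * Pc * cc)) ^ q * Y := by ring_nf
    _ ≤ (2 : ℝ≥0∞) ^ q * ((2 : ℝ≥0∞) ^ q * ((ENNReal.ofReal (Ac * Ac * Pc * cc)) ^ q * Y)) := by
        gcongr
        conv_lhs => rw [← ENNReal.rpow_one 2]
        exact ENNReal.rpow_le_rpow_of_exponent_le one_le_two hq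
    _ = (ENNReal.ofReal (4 * Ac * Ac * Pc * cc)) ^ q * Y := by
        rw [← mul_assoc, ← mul_assoc, my_two_rpow, my_emul (by norm_num) (by norm_num) hq0,
          my_emul (by norm_num) (by positivity) hq0]
        congr 3
        ring

lemma my_final_bound {G : ℝ} (hG : 1 ≤ G) (k : ℕ) {q : ℝ} (hq : 1 ≤ q) (X : ℝ≥0∞) :
    X + (k : ℝ≥0∞) * ((ENNReal.ofReal G) ^ q) ^ k * X
      ≤ (ENNReal.ofReal (2 * (k + 1) * G ^ k)) ^ q * X := by
  have hq0 : 0 ≤ q := zero_le_one.trans hq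
  have hG0 : 0 ≤ G := zero_le_one.trans hG
  have hGk : 1 ≤ G ^ k := one_le_pow₀ hG
  have hpow : ((ENNReal.ofReal G) ^ q) ^ k = (ENNReal.ofReal (G ^ k)) ^ q := by
    rw [← ENNReal.rpow_natCast ((ENNReal.ofReal G) ^ q) k, ← ENNReal.rpow_mul, mul_comm,
      ENNReal.rpow_mul, ENNReal.rpow_natCast, ENNReal.ofReal_pow hG0]
  have hk1 : (1 : ℝ) ≤ (k : ℝ) + 1 := by
    have : (0:ℝ) ≤ (k:ℝ) := Nat.cast_nonneg k
    linarith
  calc X + (k : ℝ≥0∞) * ((ENNReal.ofReal G) ^ q) ^ k * X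
      ≤ (ENNReal.ofReal ((k + 1) * G ^ k)) ^ q * X
        + (ENNReal.ofReal (k + 1)) ^ q * ((ENNReal.ofReal (G ^ k)) ^ q * X) := by
        apply add_le_add
        · exact le_mul_of_one_le_left (zero_le) (my_one_le_rpow (by nlinarith) hq)
        · rw [hpow, mul_assoc]
          apply mul_le_mul_left
          calc (k : ℝ≥0∞) = ENNReal.ofReal k := (ENNReal.ofReal_natCast k).symm
            _ ≤ ENNReal.ofReal ((k : ℝ) + 1) := ENNReal.ofReal_le_ofReal (by linarith)
            _ ≤ (ENNReal.ofReal ((k : ℝ) + 1)) ^ q := my_self_le_rpow hk1 hq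
    _ = 2 * ((ENNReal.ofReal ((k + 1) * G ^ k)) ^ q * X) := by
        rw [two_mul]
        congr 1
        rw [← mul_assoc, my_emul (by positivity) (by positivity) hq0]
    _ ≤ (ENNReal.ofReal 2) ^ q * ((ENNReal.ofReal ((k + 1) * G ^ k)) ^ q * X) := by
        gcongr
        calc (2:ℝ≥0∞) = ENNReal.ofReal 2 := by norm_num
          _ ≤ (ENNReal.ofReal 2) ^ q := my_self_le_rpow one_le_two hq
    _ = (ENNReal.ofReal (2 * (k + 1) * G ^ k)) ^ q * X := by
        rw [← mul_assoc, my_emul (by norm_num) (by positivity) hq0, mul_assoc]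
end LyapunovHelpers

open MeasureTheory Set Finset in
/-- Lemma A1: equivalence, with constants independent of `q`, between the Lyapunov norm
`|||v|||` and the `L^q` norm. Here `m ≥ k ≥ 1`, `n = k + m`, `ℓ = max{m,k} = m`,
the maps `b i j` (for `k+1 ≤ i < j ≤ k+m`) are `C¹` maps of `[0,1]` into itself with
`c₁ ≤ |b_{i,j}'| ≤ c₂` on `(0,1)`, and `M i` is a row vector acting linearly:
`M_i(ξ_{k+1},…,ξ_{m+i-1}) = ∑_{j=k+1}^{m+i-1} M i j * ξ_j`.
The conclusion is `λ⁻¹ ‖v‖_{L^q} ≤ |||v||| ≤ λ ‖v‖_{L^q}`, stated equivalently after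
raising to the power `q`. -/
theorem lyapunov_norm_equivalence (k m : ℕ) (hk : 1 ≤ k) (hkm : k ≤ m)
    (b : ℕ → ℕ → ℝ → ℝ) (c₁ c₂ : ℝ) (hc₁ : 0 < c₁) (hc₂ : 0 < c₂)
    (hb : ∀ i j, k + 1 ≤ i → i < j → j ≤ k + m →
      ContDiffOn ℝ 1 (b i j) (Icc 0 1) ∧ MapsTo (b i j) (Icc 0 1) (Icc 0 1) ∧
      ∀ x ∈ Ioo (0 : ℝ) 1,
        c₁ ≤ |derivWithin (b i j) (Icc 0 1) x| ∧ |derivWithin (b i j) (Icc 0 1) x| ≤ c₂)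
    (M : ℕ → ℕ → ℝ) :
    ∃ lam : ℝ, 1 ≤ lam ∧ ∀ q : ℝ, 1 ≤ q → ∀ v : ℕ → ℝ → ℝ,
      (∀ i, 1 ≤ i → i ≤ k + m →
        Measurable (v i) ∧ IntegrableOn (fun x => |v i x| ^ q) (Ioo 0 1)) →
      lam⁻¹ ^ q * (∑ i ∈ Finset.Icc 1 (k + m), ∫ x in Ioo (0 : ℝ) 1, |v i x| ^ q)
        ≤ (∑ i ∈ Finset.Icc 1 m, ∫ x in Ioo (0 : ℝ) 1, |v i x| ^ q)
          + (∑ i ∈ Finset.Icc 1 k, ∫ x in Ioo (0 : ℝ) 1,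
              |v (m + i) x
                - ∑ j ∈ Finset.Icc (k + 1) (m + i - 1), M i j * v j (b j (m + i) x)| ^ q)
      ∧ (∑ i ∈ Finset.Icc 1 m, ∫ x in Ioo (0 : ℝ) 1, |v i x| ^ q)
          + (∑ i ∈ Finset.Icc 1 k, ∫ x in Ioo (0 : ℝ) 1,
              |v (m + i) x
                - ∑ j ∈ Finset.Icc (k + 1) (m + i - 1), M i j * v j (b j (m + i) x)| ^ q)
        ≤ lam ^ q * ∑ i ∈ Finset.Icc 1 (k + m), ∫ x in Ioo (0 : ℝ) 1, |v i x| ^ q := by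
  classical
  -- constants
  set P : ℝ := 1 + ∑ i ∈ Finset.Icc 1 k, ∑ j ∈ Finset.Icc 1 (k + m), |M i j| with hPdef
  have habs_nonneg : (0:ℝ) ≤ ∑ i ∈ Finset.Icc 1 k, ∑ j ∈ Finset.Icc 1 (k + m), |M i j| :=
    Finset.sum_nonneg fun i _ => Finset.sum_nonneg fun j _ => abs_nonneg _
  have hP1 : 1 ≤ P := by rw [hPdef]; linarith
  have hMP : ∀ i ∈ Finset.Icc 1 k, ∀ j ∈ Finset.Icc (k + 1) (m + i - 1), |M i j| ≤ P := by
    intro i hi j hj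
    rw [Finset.mem_Icc] at hi hj
    have hj' : j ∈ Finset.Icc 1 (k + m) := by rw [Finset.mem_Icc]; omega
    have h1 : |M i j| ≤ ∑ j' ∈ Finset.Icc 1 (k + m), |M i j'| :=
      Finset.single_le_sum (f := fun j' => |M i j'|) (fun j' _ => abs_nonneg _) hj'
    have h2 : ∑ j' ∈ Finset.Icc 1 (k + m), |M i j'|
        ≤ ∑ i' ∈ Finset.Icc 1 k, ∑ j' ∈ Finset.Icc 1 (k + m), |M i' j'| :=
      Finset.single_le_sum (f := fun i' => ∑ j' ∈ Finset.Icc 1 (k + m), |M i' j'|)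
        (fun i' _ => Finset.sum_nonneg fun j' _ => abs_nonneg _)
        (by rw [Finset.mem_Icc]; omega : i ∈ Finset.Icc 1 k)
    rw [hPdef]; linarith
  set c : ℝ := c₁⁻¹ + 1 with hcdef
  have hc1 : 1 ≤ c := by
    have : 0 < c₁⁻¹ := inv_pos.2 hc₁
    rw [hcdef]; linarith
  have hcinv : c₁⁻¹ ≤ c := by rw [hcdef]; linarith
  set A : ℝ := (k + m : ℕ) + 1 with hAdef
  have hA1 : 1 ≤ A := by
    rw [hAdef]
    have : (0:ℝ) ≤ (k + m : ℕ) := Nat.cast_nonneg _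
    linarith
  set G : ℝ := 4 * A * A * P * c with hGdef
  have hG1 : 1 ≤ G := by
    rw [hGdef]
    have h2 : 1 ≤ A * A := by nlinarith
    have h3 : 1 ≤ A * A * P := by nlinarith
    nlinarith
  have hG0 : 0 ≤ G := zero_le_one.trans hG1
  have hGk1 : (1:ℝ) ≤ G ^ k := one_le_pow₀ hG1
  set lam : ℝ := 2 * (k + 1) * G ^ k with hlamdef
  have hlam1 : 1 ≤ lam := by
    rw [hlamdef]
    have hk0 : (1:ℝ) ≤ (k:ℝ) + 1 := by
      have : (0:ℝ) ≤ (k:ℝ) := Nat.cast_nonneg _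
      linarith
    nlinarith
  have hlam0 : 0 < lam := lt_of_lt_of_le zero_lt_one hlam1
  refine ⟨lam, hlam1, ?_⟩
  intro q hq v hv
  have hq0 : 0 ≤ q := zero_le_one.trans hq
  -- notation
  set u : ℕ → ℕ → ℝ → ℝ := fun j i x => v j (b j (m + i) x) with hudef
  set W : ℕ → ℝ → ℝ :=
    fun i x => v (m + i) x - ∑ j ∈ Finset.Icc (k + 1) (m + i - 1), M i j * u j i x with hWdef
  set Aq : ℕ → ℝ≥0∞ := fun i => ∫⁻ x in Ioo (0:ℝ) 1, (ENNReal.ofReal |v i x|) ^ q with hAqdef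
  set Dq : ℕ → ℝ≥0∞ := fun i => ∫⁻ x in Ioo (0:ℝ) 1, (ENNReal.ofReal |W i x|) ^ q with hDqdef
  set SA : ℝ≥0∞ := ∑ i ∈ Finset.Icc 1 (k + m), Aq i with hSAdef
  set SA' : ℝ≥0∞ := ∑ i ∈ Finset.Icc 1 m, Aq i with hSA'def
  set T : ℝ≥0∞ := SA' + ∑ i ∈ Finset.Icc 1 k, Dq i with hTdef
  set Gq : ℝ≥0∞ := (ENNReal.ofReal G) ^ q with hGqdef
  have hGq1 : 1 ≤ Gq := my_one_le_rpow hG1 hq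
  -- basic facts about v
  have hvm : ∀ i ∈ Finset.Icc 1 (k + m), Measurable (v i) := by
    intro i hi
    rw [Finset.mem_Icc] at hi
    exact (hv i hi.1 hi.2).1
  have hvint : ∀ i ∈ Finset.Icc 1 (k + m), IntegrableOn (fun x => |v i x| ^ q) (Ioo 0 1) := by
    intro i hi
    rw [Finset.mem_Icc] at hi
    exact (hv i hi.1 hi.2).2
  have hAq_eq : ∀ i, Aq i = ∫⁻ x in Ioo (0:ℝ) 1, ENNReal.ofReal (|v i x| ^ q) := by
    intro i
    rw [hAqdef]
    exact lintegral_congr fun x => ENNReal.ofReal_rpow_of_nonneg (abs_nonneg _) hq0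
  have hAfin : ∀ i ∈ Finset.Icc 1 (k + m), Aq i ≠ ⊤ := by
    intro i hi
    rw [hAq_eq i]
    exact (Integrable.lintegral_lt_top (hvint i hi)).ne
  have hSAfin : SA ≠ ⊤ := by
    rw [hSAdef]
    exact (ENNReal.sum_lt_top.2 fun i hi => lt_top_iff_ne_top.2 (hAfin i hi)).ne
  -- facts about b for relevant indices
  have hbfact : ∀ i ∈ Finset.Icc 1 k, ∀ j ∈ Finset.Icc (k + 1) (m + i - 1),
      ContDiffOn ℝ 1 (b j (m + i)) (Icc 0 1) ∧ MapsTo (b j (m + i)) (Icc 0 1) (Icc 0 1) ∧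
      ∀ x ∈ Ioo (0 : ℝ) 1, c₁ ≤ |derivWithin (b j (m + i)) (Icc 0 1) x| ∧
        |derivWithin (b j (m + i)) (Icc 0 1) x| ≤ c₂ := by
    intro i hi j hj
    rw [Finset.mem_Icc] at hi hj
    exact hb j (m + i) (by omega) (by omega) (by omega)
  -- measurability
  have hu_aem : ∀ i ∈ Finset.Icc 1 k, ∀ j ∈ Finset.Icc (k + 1) (m + i - 1),
      AEMeasurable (u j i) (volume.restrict (Ioo (0:ℝ) 1)) := by
    intro i hi j hj
    have hjmem : j ∈ Finset.Icc 1 (k + m) := by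
      rw [Finset.mem_Icc] at hi hj ⊢; omega
    exact (hvm j hjmem).comp_aemeasurable
      (((hbfact i hi j hj).1.continuousOn.mono Set.Ioo_subset_Icc_self).aemeasurable
        measurableSet_Ioo)
  have hW_aem : ∀ i ∈ Finset.Icc 1 k, AEMeasurable (W i) (volume.restrict (Ioo (0:ℝ) 1)) := by
    intro i hi
    have hmi : m + i ∈ Finset.Icc 1 (k + m) := by rw [Finset.mem_Icc] at hi ⊢; omega
    exact ((hvm (m + i) hmi).aemeasurable).sub
      (Finset.aemeasurable_fun_sum _ fun j hj => ((hu_aem i hi j hj).const_mul _))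
  -- change of variables bound
  have hCov : ∀ i ∈ Finset.Icc 1 k, ∀ j ∈ Finset.Icc (k + 1) (m + i - 1),
      (∫⁻ x in Ioo (0:ℝ) 1, (ENNReal.ofReal |u j i x|) ^ q)
        ≤ ENNReal.ofReal c * Aq j := by
    intro i hi j hj
    have h := my_cov hc₁ (hbfact i hi j hj).1 (hbfact i hi j hj).2.1
      (fun x hx => ((hbfact i hi j hj).2.2 x hx).1)
      (fun y => (ENNReal.ofReal |v j y|) ^ q)
    refine le_trans ?_ (le_trans h ?_)
    · exact le_of_eq rfl
    · exact mul_le_mul_left (ENNReal.ofReal_le_ofReal hcinv) _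
  -- pointwise triangle bounds
  have htri1 : ∀ i, ∀ x, |W i x| ≤ |v (m + i) x|
      + ∑ j ∈ Finset.Icc (k + 1) (m + i - 1), |M i j| * |u j i x| := by
    intro i x
    rw [hWdef]
    refine (abs_sub _ _).trans ?_
    gcongr
    refine (Finset.abs_sum_le_sum_abs _ _).trans ?_
    apply le_of_eq
    exact Finset.sum_congr rfl fun j _ => abs_mul _ _
  have htri2 : ∀ i, ∀ x, |v (m + i) x| ≤ |W i x|
      + ∑ j ∈ Finset.Icc (k + 1) (m + i - 1), |M i j| * |u j i x| := by
    intro i x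
    have hvx : v (m + i) x = W i x + ∑ j ∈ Finset.Icc (k + 1) (m + i - 1), M i j * u j i x := by
      rw [hWdef]; ring
    rw [hvx]
    refine (abs_add_le _ _).trans ?_
    gcongr
    refine (Finset.abs_sum_le_sum_abs _ _).trans ?_
    apply le_of_eq
    exact Finset.sum_congr rfl fun j _ => abs_mul _ _
  -- card bound
  have hcard : ∀ i ∈ Finset.Icc 1 k, ((Finset.Icc (k + 1) (m + i - 1)).card : ℝ) ≤ A := by
    intro i hi
    rw [Finset.mem_Icc] at hi
    rw [Nat.card_Icc, hAdef]
    have hle : m + i - 1 + 1 - (k + 1) ≤ k + m := by omega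
    calc ((m + i - 1 + 1 - (k + 1) : ℕ) : ℝ) ≤ ((k + m : ℕ) : ℝ) := by exact_mod_cast hle
      _ ≤ ((k + m : ℕ) : ℝ) + 1 := by linarith
  -- upper bound for Dq
  have hD : ∀ i ∈ Finset.Icc 1 k, Dq i ≤ Gq * SA := by
    intro i hi
    have hmi : m + i ∈ Finset.Icc 1 (k + m) := by rw [Finset.mem_Icc] at hi ⊢; omega
    have hstep := my_tri_int (Finset.Icc (k + 1) (m + i - 1)) (W i) (v (m + i)) (M i)
      (fun j => u j i) hq ((hvm (m + i) hmi).aemeasurable)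
      (fun j hj => hu_aem i hi j hj) (htri1 i)
    refine le_trans hstep ?_
    rw [hGqdef, hGdef]
    apply my_shape hA1 hP1 hc1 hq _ (M i) (hMP i hi) (hcard i hi) (Aq (m + i)) SA
      (fun j => ∫⁻ x in Ioo (0:ℝ) 1, (ENNReal.ofReal |u j i x|) ^ q) Aq
      (fun j hj => hCov i hi j hj)
      (Finset.single_le_sum (fun i' _ => zero_le) hmi)
    intro j hj
    have hjmem : j ∈ Finset.Icc 1 (k + m) := by
      rw [Finset.mem_Icc] at hi hj ⊢; omega
    exact Finset.single_le_sum (fun i' _ => zero_le) hjmem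
  have hDfin : ∀ i ∈ Finset.Icc 1 k, Dq i ≠ ⊤ := by
    intro i hi
    exact ne_top_of_le_ne_top (ENNReal.mul_ne_top
      (ENNReal.rpow_ne_top_of_nonneg hq0 ENNReal.ofReal_ne_top) hSAfin) (hD i hi)
  have hTfin : T ≠ ⊤ := by
    rw [hTdef]
    apply ENNReal.add_ne_top.2
    constructor
    · rw [hSA'def]
      exact (ENNReal.sum_lt_top.2 fun i hi => lt_top_iff_ne_top.2
        (hAfin i (by rw [Finset.mem_Icc] at hi ⊢; omega))).ne
    · exact (ENNReal.sum_lt_top.2 fun i hi => lt_top_iff_ne_top.2 (hDfin i hi)).ne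
  -- upper bound : T ≤ lam^q * SA
  have hT_le : T ≤ (ENNReal.ofReal lam) ^ q * SA := by
    have h1 : SA' ≤ SA := by
      rw [hSA'def, hSAdef]
      exact Finset.sum_le_sum_of_subset (Finset.Icc_subset_Icc le_rfl (by omega))
    have h2 : ∑ i ∈ Finset.Icc 1 k, Dq i ≤ (k : ℝ≥0∞) * Gq ^ k * SA := by
      calc ∑ i ∈ Finset.Icc 1 k, Dq i ≤ (Finset.Icc 1 k).card • (Gq ^ k * SA) := by
            apply Finset.sum_le_card_nsmul
            intro i hi
            refine (hD i hi).trans ?_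
            exact mul_le_mul_left (le_trans (by rw [pow_one]) (pow_le_pow_right₀ hGq1 hk)) _
        _ = (k : ℝ≥0∞) * (Gq ^ k * SA) := by rw [nsmul_eq_mul, Nat.card_Icc]; norm_num
        _ = (k : ℝ≥0∞) * Gq ^ k * SA := by ring
    calc T ≤ SA + (k : ℝ≥0∞) * Gq ^ k * SA := by rw [hTdef]; exact add_le_add h1 h2
      _ ≤ (ENNReal.ofReal (2 * (k + 1) * G ^ k)) ^ q * SA := by
          rw [hGqdef]
          exact my_final_bound hG1 k hq SA
      _ = (ENNReal.ofReal lam) ^ q * SA := by rw [hlamdef]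
  -- lower bound by strong induction
  have hlow : ∀ i, 1 ≤ i → i ≤ k → Aq (m + i) ≤ Gq ^ i * T := by
    intro i
    induction i using Nat.strong_induction_on with
    | _ i IH =>
      intro hi1 hik
      have hi : i ∈ Finset.Icc 1 k := by rw [Finset.mem_Icc]; omega
      have hYT : T ≤ Gq ^ (i - 1) * T :=
        le_mul_of_one_le_left (zero_le) (one_le_pow_of_one_le' hGq1 _)
      have hAY : ∀ j ∈ Finset.Icc (k + 1) (m + i - 1), Aq j ≤ Gq ^ (i - 1) * T := by
        intro j hj
        rw [Finset.mem_Icc] at hj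
        by_cases hjm : j ≤ m
        · refine le_trans ?_ hYT
          rw [hTdef]
          refine le_trans ?_ le_self_add
          rw [hSA'def]
          exact Finset.single_le_sum (fun i' _ => zero_le)
            (by rw [Finset.mem_Icc]; omega)
        · have hj1 : 1 ≤ j - m := by omega
          have hj2 : j - m < i := by omega
          have hj3 : j - m ≤ k := by omega
          have := IH (j - m) hj2 hj1 hj3
          rw [show m + (j - m) = j by omega] at this
          refine this.trans ?_
          exact mul_le_mul_left (pow_le_pow_right₀ hGq1 (by omega)) _
      have hDY : Dq i ≤ Gq ^ (i - 1) * T := by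
        refine le_trans ?_ hYT
        rw [hTdef]
        refine le_trans ?_ le_add_self
        exact Finset.single_le_sum (fun i' _ => zero_le) hi
      have hmi : m + i ∈ Finset.Icc 1 (k + m) := by rw [Finset.mem_Icc]; omega
      have hstep := my_tri_int (Finset.Icc (k + 1) (m + i - 1)) (v (m + i)) (W i) (M i)
        (fun j => u j i) hq (hW_aem i hi) (fun j hj => hu_aem i hi j hj) (htri2 i)
      refine le_trans hstep ?_
      have hshape := my_shape hA1 hP1 hc1 hq (Finset.Icc (k + 1) (m + i - 1)) (M i)
        (hMP i hi) (hcard i hi) (Dq i) (Gq ^ (i - 1) * T)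
        (fun j => ∫⁻ x in Ioo (0:ℝ) 1, (ENNReal.ofReal |u j i x|) ^ q) Aq
        (fun j hj => hCov i hi j hj) hDY hAY
      refine le_trans hshape ?_
      rw [← hGdef, ← hGqdef, ← mul_assoc, ← pow_succ']
      rw [show i - 1 + 1 = i by omega]
  -- SA ≤ lam^q * T
  have hsplit : SA = SA' + ∑ i ∈ Finset.Icc 1 k, Aq (m + i) := by
    rw [hSAdef, hSA'def]
    have e1 : Finset.Icc 1 (k + m) = Finset.Icc 1 m ∪ Finset.Icc (m + 1) (m + k) := by
      ext x
      simp only [Finset.mem_Icc, Finset.mem_union]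
      omega
    rw [e1, Finset.sum_union]
    · congr 1
      rw [show Finset.Icc (m + 1) (m + k) = Finset.map (addLeftEmbedding m) (Finset.Icc 1 k) from
        (Finset.map_add_left_Icc 1 k m).symm, Finset.sum_map]
      rfl
    · rw [Finset.disjoint_left]
      intro x hx hx'
      rw [Finset.mem_Icc] at hx hx'
      omega
  have hSA_le : SA ≤ (ENNReal.ofReal lam) ^ q * T := by
    have h2 : ∑ i ∈ Finset.Icc 1 k, Aq (m + i) ≤ (k : ℝ≥0∞) * Gq ^ k * T := by
      calc ∑ i ∈ Finset.Icc 1 k, Aq (m + i) ≤ (Finset.Icc 1 k).card • (Gq ^ k * T) := by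
            apply Finset.sum_le_card_nsmul
            intro i hi
            rw [Finset.mem_Icc] at hi
            refine (hlow i hi.1 hi.2).trans ?_
            exact mul_le_mul_left (pow_le_pow_right₀ hGq1 hi.2) _
        _ = (k : ℝ≥0∞) * (Gq ^ k * T) := by rw [nsmul_eq_mul, Nat.card_Icc]; norm_num
        _ = (k : ℝ≥0∞) * Gq ^ k * T := by ring
    have h1 : SA' ≤ T := by rw [hTdef]; exact le_self_add
    calc SA ≤ T + (k : ℝ≥0∞) * Gq ^ k * T := by rw [hsplit]; exact add_le_add h1 h2
      _ ≤ (ENNReal.ofReal (2 * (k + 1) * G ^ k)) ^ q * T := by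
          rw [hGqdef]
          exact my_final_bound hG1 k hq T
      _ = (ENNReal.ofReal lam) ^ q * T := by rw [hlamdef]
  -- conversion to real integrals
  have hrpow_meas : Measurable fun y : ℝ => |y| ^ q := by
    have hcont : Continuous fun y : ℝ => y ^ q := by
      rw [continuous_iff_continuousAt]
      intro x
      exact Real.continuousAt_rpow_const x q (Or.inr hq0)
    exact (hcont.comp continuous_abs).measurable
  have hconvA : ∀ i ∈ Finset.Icc 1 (k + m),
      (∫ x in Ioo (0:ℝ) 1, |v i x| ^ q) = (Aq i).toReal := by
    intro i hi
    rw [integral_eq_lintegral_of_nonneg_ae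
      (Filter.Eventually.of_forall fun x => Real.rpow_nonneg (abs_nonneg _) q)
      (hvint i hi).aestronglyMeasurable, hAq_eq i]
  have hconvD : ∀ i ∈ Finset.Icc 1 k,
      (∫ x in Ioo (0:ℝ) 1, |W i x| ^ q) = (Dq i).toReal := by
    intro i hi
    rw [integral_eq_lintegral_of_nonneg_ae
      (Filter.Eventually.of_forall fun x => Real.rpow_nonneg (abs_nonneg _) q)
      ((hrpow_meas.comp_aemeasurable (hW_aem i hi)).aestronglyMeasurable)]
    rw [hDqdef]
    congr 1
    exact lintegral_congr fun x =>
      (ENNReal.ofReal_rpow_of_nonneg (abs_nonneg _) hq0).symm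
  -- rewrite goal sums
  have hSreal : (∑ i ∈ Finset.Icc 1 (k + m), ∫ x in Ioo (0:ℝ) 1, |v i x| ^ q) = SA.toReal := by
    rw [hSAdef, ENNReal.toReal_sum hAfin]
    exact Finset.sum_congr rfl hconvA
  have hTreal : ((∑ i ∈ Finset.Icc 1 m, ∫ x in Ioo (0:ℝ) 1, |v i x| ^ q)
      + ∑ i ∈ Finset.Icc 1 k, ∫ x in Ioo (0:ℝ) 1,
          |v (m + i) x - ∑ j ∈ Finset.Icc (k + 1) (m + i - 1),
            M i j * v j (b j (m + i) x)| ^ q) = T.toReal := by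
    rw [hTdef, ENNReal.toReal_add]
    · congr 1
      · rw [hSA'def, ENNReal.toReal_sum fun i hi =>
          hAfin i (by rw [Finset.mem_Icc] at hi ⊢; omega)]
        exact Finset.sum_congr rfl fun i hi => hconvA i
          (by rw [Finset.mem_Icc] at hi ⊢; omega)
      · rw [ENNReal.toReal_sum hDfin]
        exact Finset.sum_congr rfl fun i hi => hconvD i hi
    · rw [hSA'def]
      exact (ENNReal.sum_lt_top.2 fun i hi => lt_top_iff_ne_top.2
        (hAfin i (by rw [Finset.mem_Icc] at hi ⊢; omega))).ne
    · exact (ENNReal.sum_lt_top.2 fun i hi => lt_top_iff_ne_top.2 (hDfin i hi)).ne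
  rw [hSreal, hTreal]
  have hofReal : (ENNReal.ofReal lam) ^ q = ENNReal.ofReal (lam ^ q) :=
    ENNReal.ofReal_rpow_of_nonneg hlam0.le hq0
  have hlamq0 : 0 ≤ lam ^ q := Real.rpow_nonneg hlam0.le q
  constructor
  · -- lower
    have h1 : SA.toReal ≤ lam ^ q * T.toReal := by
      have := ENNReal.toReal_mono (by
          rw [hofReal]
          exact ENNReal.mul_ne_top ENNReal.ofReal_ne_top hTfin) hSA_le
      rwa [hofReal, ENNReal.toReal_mul, ENNReal.toReal_ofReal hlamq0] at this
    have hcancel : lam⁻¹ ^ q * lam ^ q = 1 := by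
      rw [← Real.mul_rpow (inv_nonneg.2 hlam0.le) hlam0.le, inv_mul_cancel₀ hlam0.ne',
        Real.one_rpow]
    calc lam⁻¹ ^ q * SA.toReal ≤ lam⁻¹ ^ q * (lam ^ q * T.toReal) := by
          apply mul_le_mul_of_nonneg_left h1 (Real.rpow_nonneg (inv_nonneg.2 hlam0.le) q)
      _ = (lam⁻¹ ^ q * lam ^ q) * T.toReal := by ring
      _ = T.toReal := by rw [hcancel, one_mul]
  · -- upper
    have := ENNReal.toReal_mono (by
        rw [hofReal]
        exact ENNReal.mul_ne_top ENNReal.ofReal_ne_top hSAfin) hT_le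
    rwa [hofReal, ENNReal.toReal_mul, ENNReal.toReal_ofReal hlamq0] at this
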